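/- The function inv on S_n is conditionally negative semidefinite: for any complex numbers (x_σ)_{σ∈S_n} with ∑_σ x_σ = 0, one has ∑_{g,h∈S_n} inv(g⁻¹h)·x_g·conj(x_h) ≤ 0 (the left-hand side is real). -/

import Mathlib

def descents (n : ℕ) (σ : Equiv.Perm (Fin n)) : Finset (Fin (n - 1)) :=
  Finset.univ.filter fun i =>
    σ ⟨i.1 + 1, by have := i.isLt; omega⟩ < σ ⟨i.1, by have := i.isLt; omega⟩

def desStat (n : ℕ) (σ : Equiv.Perm (Fin n)) : ℕ := (descents n σ).card

def majStat (n : ℕ) (σ : Equiv.Perm (Fin n)) : ℕ := ∑ i ∈ descents n σ, (i.1 + 1)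

def invStat (n : ℕ) (σ : Equiv.Perm (Fin n)) : ℕ :=
  (Finset.univ.filter fun p : Fin n × Fin n => p.1 < p.2 ∧ σ p.2 < σ p.1).card

def fixStat (n : ℕ) (σ : Equiv.Perm (Fin n)) : ℕ :=
  (Finset.univ.filter fun i : Fin n => σ i = i).card

open Finset in
lemma invStat_eq_card (n : ℕ) (g h : Equiv.Perm (Fin n)) :
    invStat n (g⁻¹ * h) =
      (Finset.univ.filter fun q : Fin n × Fin n =>
        q.1 < q.2 ∧ ¬((g⁻¹ q.1 < g⁻¹ q.2) ↔ (h⁻¹ q.1 < h⁻¹ q.2))).card := by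
  unfold invStat
  refine Finset.card_nbij'
    (fun p => if h p.1 < h p.2 then (h p.1, h p.2) else (h p.2, h p.1))
    (fun q => if h⁻¹ q.1 < h⁻¹ q.2 then (h⁻¹ q.1, h⁻¹ q.2) else (h⁻¹ q.2, h⁻¹ q.1))
    ?_ ?_ ?_ ?_
  · intro p hp
    simp only [mem_coe, mem_filter] at hp ⊢
    simp only [mem_coe, mem_filter, mem_univ, true_and, Equiv.Perm.mul_apply] at hp ⊢
    obtain ⟨h12, hσ⟩ := hp
    have hne : h p.1 ≠ h p.2 := fun e => absurd (h.injective e) h12.ne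
    rcases hne.lt_or_gt with hlt | hlt
    · rw [if_pos hlt]
      refine ⟨hlt, ?_⟩
      simp only [Equiv.Perm.coe_inv, Equiv.symm_apply_apply]
      intro hiff
      exact absurd (hiff.mpr h12) (not_lt.mpr hσ.le)
    · rw [if_neg (not_lt.mpr hlt.le)]
      refine ⟨hlt, ?_⟩
      simp only [Equiv.Perm.coe_inv, Equiv.symm_apply_apply]
      intro hiff
      exact absurd (hiff.mp hσ) (not_lt.mpr h12.le)
  · intro q hq
    simp only [mem_coe, mem_filter] at hq ⊢
    simp only [mem_coe, mem_filter, mem_univ, true_and, Equiv.Perm.mul_apply] at hq ⊢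
    obtain ⟨h12, hniff⟩ := hq
    have hne : h⁻¹ q.1 ≠ h⁻¹ q.2 := fun e => absurd (h⁻¹.injective e) h12.ne
    have hgne : g⁻¹ q.1 ≠ g⁻¹ q.2 := fun e => absurd (g⁻¹.injective e) h12.ne
    rcases hne.lt_or_gt with hlt | hlt
    · rw [if_pos hlt]
      refine ⟨hlt, ?_⟩
      simp only [Equiv.Perm.coe_inv, Equiv.apply_symm_apply]
      rcases hgne.lt_or_gt with hg | hg
      · exact absurd (iff_of_true hg hlt) hniff
      · exact hg
    · rw [if_neg (not_lt.mpr hlt.le)]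
      refine ⟨hlt, ?_⟩
      simp only [Equiv.Perm.coe_inv, Equiv.apply_symm_apply]
      rcases hgne.lt_or_gt with hg | hg
      · exact hg
      · exact absurd (iff_of_false (not_lt.mpr hg.le) (not_lt.mpr hlt.le)) hniff
  · intro p hp
    simp only [mem_coe, mem_filter, mem_univ, true_and] at hp
    have hne : h p.1 ≠ h p.2 := fun e => absurd (h.injective e) hp.1.ne
    rcases hne.lt_or_gt with hlt | hlt
    · simp [if_pos hlt, Equiv.Perm.coe_inv, Equiv.symm_apply_apply, hp.1]
    · simp [if_neg (not_lt.mpr hlt.le), Equiv.Perm.coe_inv, Equiv.symm_apply_apply,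
        not_lt.mpr hp.1.le]
  · intro q hq
    simp only [mem_coe, mem_filter, mem_univ, true_and] at hq
    have hne : h⁻¹ q.1 ≠ h⁻¹ q.2 := fun e => absurd (h⁻¹.injective e) hq.1.ne
    rcases hne.lt_or_gt with hlt | hlt
    · simp [if_pos (show h.symm q.1 < h.symm q.2 from hlt), Equiv.Perm.coe_inv, Equiv.apply_symm_apply, hq.1]
    · simp [if_neg (not_lt.mpr (show h.symm q.2 ≤ h.symm q.1 from hlt.le)), Equiv.Perm.coe_inv, Equiv.apply_symm_apply,
        not_lt.mpr hq.1.le]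


lemma sum_sum_sum_comm {α β γ M : Type*} [AddCommMonoid M]
    (s : Finset α) (t : Finset β) (u : Finset γ) (f : α → β → γ → M) :
    ∑ a ∈ s, ∑ b ∈ t, ∑ c ∈ u, f a b c
      = ∑ c ∈ u, ∑ a ∈ s, ∑ b ∈ t, f a b c := by
  rw [show (∑ a ∈ s, ∑ b ∈ t, ∑ c ∈ u, f a b c)
      = ∑ a ∈ s, ∑ c ∈ u, ∑ b ∈ t, f a b c from
    Finset.sum_congr rfl fun a _ => Finset.sum_comm]
  exact Finset.sum_comm

open ComplexOrder in
theorem inv_conditionally_negative (n : ℕ) (x : Equiv.Perm (Fin n) → ℂ)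
    (hx : ∑ σ : Equiv.Perm (Fin n), x σ = 0) :
    ∑ g : Equiv.Perm (Fin n), ∑ h : Equiv.Perm (Fin n),
        (invStat n (g⁻¹ * h) : ℂ) * x g * (starRingEnd ℂ) (x h) ≤ 0 := by
  classical
  set P : Finset (Fin n × Fin n) := Finset.univ.filter fun q => q.1 < q.2 with hP
  set F : Fin n × Fin n → Equiv.Perm (Fin n) → ℂ :=
    fun q σ => if σ⁻¹ q.1 < σ⁻¹ q.2 then 1 else 0 with hF
  have hFsq : ∀ q σ, F q σ * F q σ = F q σ := by
    intro q σ; simp only [hF]; split <;> ring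
  have hFconj : ∀ q σ, (starRingEnd ℂ) (F q σ) = F q σ := by
    intro q σ; simp only [hF]; split <;> simp
  have hconjsum : ∑ h : Equiv.Perm (Fin n), (starRingEnd ℂ) (x h) = 0 := by
    rw [← map_sum, hx, map_zero]
  have hcast : ∀ g h : Equiv.Perm (Fin n), (invStat n (g⁻¹ * h) : ℂ) =
      ∑ q ∈ P, (F q g - F q h) * (F q g - F q h) := by
    intro g h
    rw [invStat_eq_card]
    have : (Finset.univ.filter fun q : Fin n × Fin n =>
        q.1 < q.2 ∧ ¬((g⁻¹ q.1 < g⁻¹ q.2) ↔ (h⁻¹ q.1 < h⁻¹ q.2)))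
        = P.filter fun q => ¬((g⁻¹ q.1 < g⁻¹ q.2) ↔ (h⁻¹ q.1 < h⁻¹ q.2)) := by
      rw [hP, Finset.filter_filter]
    rw [this, Finset.card_filter]
    push_cast
    refine Finset.sum_congr rfl fun q _ => ?_
    by_cases hg : g⁻¹ q.1 < g⁻¹ q.2 <;> by_cases hh : h⁻¹ q.1 < h⁻¹ q.2 <;>
      simp only [Equiv.Perm.inv_def] at hg hh <;> simp [hF, hg, hh]
  calc ∑ g : Equiv.Perm (Fin n), ∑ h : Equiv.Perm (Fin n),
        (invStat n (g⁻¹ * h) : ℂ) * x g * (starRingEnd ℂ) (x h)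
      = ∑ q ∈ P, ∑ g : Equiv.Perm (Fin n), ∑ h : Equiv.Perm (Fin n),
          (F q g - F q h) * (F q g - F q h) * x g * (starRingEnd ℂ) (x h) := by
        simp_rw [hcast, Finset.sum_mul]
        rw [sum_sum_sum_comm]
    _ = ∑ q ∈ P, (-2) * ((∑ g : Equiv.Perm (Fin n), F q g * x g) * (starRingEnd ℂ) (∑ g : Equiv.Perm (Fin n), F q g * x g)) := by
        refine Finset.sum_congr rfl fun q _ => ?_
        have expand : ∀ g h' : Equiv.Perm (Fin n),
            (F q g - F q h') * (F q g - F q h') * x g * (starRingEnd ℂ) (x h')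
              = (F q g * x g) * (starRingEnd ℂ) (x h')
                + x g * (F q h' * (starRingEnd ℂ) (x h'))
                - 2 * ((F q g * x g) * (F q h' * (starRingEnd ℂ) (x h'))) := by
          intro g h'
          have hg := hFsq q g; have hh := hFsq q h'
          linear_combination (x g * (starRingEnd ℂ) (x h')) * hg
            + (x g * (starRingEnd ℂ) (x h')) * hh
        have hD : ∑ h' : Equiv.Perm (Fin n), F q h' * (starRingEnd ℂ) (x h')
            = (starRingEnd ℂ) (∑ g : Equiv.Perm (Fin n), F q g * x g) := by
          rw [map_sum]
          refine Finset.sum_congr rfl fun h' _ => ?_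
          rw [map_mul, hFconj]
        simp only [expand, Finset.sum_add_distrib, Finset.sum_sub_distrib]
        have hA : ∑ g : Equiv.Perm (Fin n), ∑ h' : Equiv.Perm (Fin n),
            (F q g * x g) * (starRingEnd ℂ) (x h') = 0 := by
          simp only [← Finset.mul_sum, hconjsum, mul_zero, Finset.sum_const_zero]
        have hB : ∑ g : Equiv.Perm (Fin n), ∑ h' : Equiv.Perm (Fin n),
            x g * (F q h' * (starRingEnd ℂ) (x h')) = 0 := by
          simp only [← Finset.mul_sum, hD, ← Finset.sum_mul, hx, zero_mul]
        have hC : ∑ g : Equiv.Perm (Fin n), ∑ h' : Equiv.Perm (Fin n),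
            2 * ((F q g * x g) * (F q h' * (starRingEnd ℂ) (x h')))
            = 2 * ((∑ g : Equiv.Perm (Fin n), F q g * x g)
                * (starRingEnd ℂ) (∑ g : Equiv.Perm (Fin n), F q g * x g)) := by
          simp only [← Finset.mul_sum, hD, ← Finset.sum_mul]
        rw [hA, hB, hC]
        ring
    _ ≤ 0 := by
        refine Finset.sum_nonpos fun q _ => ?_
        set z := ∑ g : Equiv.Perm (Fin n), F q g * x g
        rw [Complex.mul_conj]
        have h1 : (-2 : ℂ) * (Complex.normSq z : ℂ)
            = ((-2 * Complex.normSq z : ℝ) : ℂ) := by push_cast; ring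
        rw [h1, show (0 : ℂ) = ((0 : ℝ) : ℂ) by simp, Complex.real_le_real]
        nlinarith [Complex.normSq_nonneg z]
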